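/- Let E be a finite-dimensional ℂ-vector space and T ∈ End(E). Let A ⊆ [0,1) be a finite set of real numbers such that every eigenvalue of T is of the form −α with α ∈ A; for α ∈ A let E_α := ⋃_m ker(T + α·id)^m be the generalized eigenspace, so that E = ⊕_{α∈A} E_α; for α ∈ A set V_α E := ⊕_{α′∈A, α′≤α} E_{α′} and let π_α : V_α E → E_α be the projection with kernel ⊕_{α′∈A, α′<α} E_{α′}. Let (G_k)_{k∈ℤ} be an increasing family of ℂ-subspaces of E with G_k = 0 for all sufficiently small k and G_k = E for all sufficiently large k. Suppose that for each α ∈ A there is a decreasing family (H_α^k)_{k∈ℤ} of subspaces of E_α such that T(H_α^k) ⊆ H_α^k for all k, and such that for every k ∈ ℤ the space E_α is the internal direct sum of H_α^k and π_α(G_{k−1} ∩ V_α E). Then, setting L^k := ⊕_{α∈A} H_α^k, one has T(L^k) ⊆ L^k for all k, and for every k ∈ ℤ the space E is the internal direct sum of L^k and G_{k−1}. -/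

import Mathlib

set_option maxHeartbeats 1000000

noncomputable section

variable {E : Type} [AddCommGroup E] [Module ℂ E]

/-- the generalized eigenspace `E_α = ⋃ₘ ker (T + α·id)^m` -/
noncomputable def genEig (T : Module.End ℂ E) (α : ℝ) : Submodule ℂ E :=
  ⨆ m : ℕ, LinearMap.ker ((T + (α : ℂ) • (1 : Module.End ℂ E)) ^ m)

/-- `V_α E = ⊕_{α′ ∈ A, α′ ≤ α} E_{α′}` -/
noncomputable def VaE (T : Module.End ℂ E) (A : Finset ℝ) (α : ℝ) : Submodule ℂ E :=
  ⨆ α' : {a : ℝ // a ∈ A ∧ a ≤ α}, genEig T α'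

/-- `⊕_{α′ ∈ A, α′ < α} E_{α′}`, the kernel of the projection `π_α` -/
noncomputable def lowEig (T : Module.End ℂ E) (A : Finset ℝ) (α : ℝ) : Submodule ℂ E :=
  ⨆ α' : {a : ℝ // a ∈ A ∧ a < α}, genEig T α'

/-- the image `π_α(G_{k−1} ∩ V_α E)` of the projection `π_α : V_α E → E_α`
with kernel `⊕_{α′<α} E_{α′}` -/
def piImg (T : Module.End ℂ E) (A : Finset ℝ) (G : ℤ → Submodule ℂ E) (α : ℝ) (k : ℤ) :
    Set E :=
  {y | y ∈ genEig T α ∧ ∃ x, x ∈ G (k - 1) ∧ x ∈ VaE T A α ∧ x - y ∈ lowEig T A α}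

lemma genEig_eq_max (T : Module.End ℂ E) (α : ℝ) :
    genEig T α = T.maxGenEigenspace (-(α : ℂ)) := by
  rw [← Module.End.iSup_genEigenspace_eq]
  unfold genEig
  congr 1
  ext m
  rw [Module.End.genEigenspace_nat, neg_smul, sub_neg_eq_add]

lemma iSup_genEig_eq_top (T : Module.End ℂ E) [FiniteDimensional ℂ E] (A : Finset ℝ)
    (heig : ∀ c : ℂ, Module.End.HasEigenvalue T c → ∃ a ∈ A, c = -(a : ℂ)) :
    (⨆ a : {a : ℝ // a ∈ A}, genEig T ↑a) = ⊤ := by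
  rw [eq_top_iff, ← Module.End.iSup_maxGenEigenspace_eq_top T]
  apply iSup_le
  intro μ
  by_cases hμ : T.maxGenEigenspace μ = ⊥
  · simp [hμ]
  · have hev : Module.End.HasEigenvalue T μ := by
      rw [← Module.End.iSup_genEigenspace_eq] at hμ
      obtain ⟨k, hk⟩ : ∃ k : ℕ, T.genEigenspace μ k ≠ ⊥ := by
        by_contra h
        push_neg at h
        exact hμ (by simp [h])
      exact Module.End.hasEigenvalue_of_hasGenEigenvalue hk
    obtain ⟨a, ha, rfl⟩ := heig μ hev
    rw [← genEig_eq_max]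
    exact le_iSup (fun a : {a : ℝ // a ∈ A} => genEig T ↑a) ⟨a, ha⟩

/-- glueing filtrations opposite to `G_•` on the generalized eigenspaces
into a filtration opposite to `G_•` on `E`. -/
theorem statement10 (E : Type) [AddCommGroup E] [Module ℂ E] [FiniteDimensional ℂ E]
    (T : Module.End ℂ E) (A : Finset ℝ) (hA : ∀ a ∈ A, 0 ≤ a ∧ a < 1)
    (heig : ∀ c : ℂ, Module.End.HasEigenvalue T c → ∃ a ∈ A, c = -(a : ℂ))
    (G : ℤ → Submodule ℂ E) (hGmono : Monotone G)
    (hGbot : ∃ k₀ : ℤ, ∀ k ≤ k₀, G k = ⊥) (hGtop : ∃ k₁ : ℤ, ∀ k ≥ k₁, G k = ⊤)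
    (H : ℝ → ℤ → Submodule ℂ E)
    (hHsub : ∀ a ∈ A, ∀ k : ℤ, H a k ≤ genEig T a)
    (hHdec : ∀ a ∈ A, ∀ k l : ℤ, k ≤ l → H a l ≤ H a k)
    (hHT : ∀ a ∈ A, ∀ k : ℤ, ∀ x ∈ H a k, T x ∈ H a k)
    (hdirect : ∀ a ∈ A, ∀ k : ℤ,
      (∀ y ∈ genEig T a, ∃ h ∈ H a k, ∃ p ∈ piImg T A G a k, y = h + p) ∧
      (∀ y : E, y ∈ H a k → y ∈ piImg T A G a k → y = 0)) :
    ∀ k : ℤ,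
      (∀ x ∈ (⨆ a : {a : ℝ // a ∈ A}, H a k), T x ∈ (⨆ a : {a : ℝ // a ∈ A}, H a k)) ∧
      (⨆ a : {a : ℝ // a ∈ A}, H a k) ⊔ G (k - 1) = ⊤ ∧
      (⨆ a : {a : ℝ // a ∈ A}, H a k) ⊓ G (k - 1) = ⊥ := by
  classical
  intro k
  set L : Submodule ℂ E := ⨆ a : {a : ℝ // a ∈ A}, H (↑a) k with hL
  refine ⟨?_, ?_, ?_⟩
  · -- T-stability
    intro x hx
    refine Submodule.iSup_induction (motive := fun x => T x ∈ L)
      (fun a : {a : ℝ // a ∈ A} => H (↑a) k) hx ?_ (by simp) ?_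
    · intro i y hy
      exact le_iSup (fun a : {a : ℝ // a ∈ A} => H (↑a) k) i (hHT i i.2 k y hy)
    · intro y z hy hz
      rw [map_add]
      exact add_mem hy hz
  · -- L ⊔ G (k-1) = ⊤
    have key : ∀ n : ℕ, ∀ a ∈ A, (A.filter (· < a)).card < n →
        genEig T a ≤ L ⊔ G (k - 1) := by
      intro n
      induction n with
      | zero => intro a ha h; omega
      | succ n ih =>
        intro a ha hcard
        have hlow : lowEig T A a ≤ L ⊔ G (k - 1) := by
          apply iSup_le
          rintro ⟨b, hbA, hba⟩
          apply ih b hbA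
          have hsub : A.filter (· < b) ⊂ A.filter (· < a) := by
            refine Finset.ssubset_iff_of_subset ?_ |>.mpr ⟨b, ?_, ?_⟩
            · intro x hx
              simp only [Finset.mem_filter] at hx ⊢
              exact ⟨hx.1, lt_trans hx.2 hba⟩
            · simp [Finset.mem_filter, hbA, hba]
            · simp [Finset.mem_filter]
          have := Finset.card_lt_card hsub
          omega
        intro y hy
        obtain ⟨hd1, _⟩ := hdirect a ha k
        obtain ⟨h, hh, p, hp, hyhp⟩ := hd1 y hy
        obtain ⟨hpE, x, hxG, hxV, hxp⟩ := hp
        have hhL : h ∈ L ⊔ G (k - 1) :=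
          Submodule.mem_sup_left (le_iSup (fun a : {a : ℝ // a ∈ A} => H (↑a) k) ⟨a, ha⟩ hh)
        have hpL : p ∈ L ⊔ G (k - 1) := by
          rw [show p = x - (x - p) from (sub_sub_cancel x p).symm]
          exact sub_mem (Submodule.mem_sup_right hxG) (hlow hxp)
        rw [hyhp]
        exact add_mem hhL hpL
    rw [eq_top_iff, ← iSup_genEig_eq_top T A heig]
    apply iSup_le
    rintro ⟨a, ha⟩
    exact key ((A.filter (· < a)).card + 1) a ha (Nat.lt_succ_self _)
  · -- L ⊓ G (k-1) = ⊥
    rw [eq_bot_iff]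
    intro x hx
    rw [Submodule.mem_inf] at hx
    obtain ⟨hxL, hxG⟩ := hx
    rw [hL, Submodule.mem_iSup_iff_exists_finsupp] at hxL
    obtain ⟨f, hf, hsum⟩ := hxL
    simp only [Submodule.mem_bot]
    by_contra hx0
    have hne : f.support.Nonempty := by
      rw [Finsupp.support_nonempty_iff]
      rintro rfl
      exact hx0 (by simpa using hsum.symm)
    obtain ⟨i, hi, hmax⟩ := f.support.exists_max_image (fun j => (j : ℝ)) hne
    have hiA : (i : ℝ) ∈ A := i.2
    have hfiH : f i ∈ H (↑i) k := hf i
    -- x ∈ VaE T A i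
    have hxV : x ∈ VaE T A (↑i) := by
      rw [← hsum]
      apply Submodule.sum_mem
      intro j hj
      have hjle : (j : ℝ) ≤ (i : ℝ) := hmax j hj
      exact le_iSup (fun α' : {a : ℝ // a ∈ A ∧ a ≤ (i : ℝ)} => genEig T ↑α')
        ⟨(j : ℝ), j.2, hjle⟩ (hHsub (↑j) j.2 k (hf j))
    -- x - f i ∈ lowEig T A i
    have hxlow : x - f i ∈ lowEig T A (↑i) := by
      have hx' : x - f i = ∑ j ∈ f.support.erase i, f j := by
        rw [← hsum, Finsupp.sum, ← Finset.add_sum_erase _ _ hi]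
        abel
      rw [hx']
      apply Submodule.sum_mem
      intro j hj
      have hjne : j ≠ i := Finset.ne_of_mem_erase hj
      have hjlt : (j : ℝ) < (i : ℝ) := by
        rcases lt_or_eq_of_le (hmax j (Finset.mem_of_mem_erase hj)) with h | h
        · exact h
        · exact absurd (Subtype.ext h) hjne
      exact le_iSup (fun α' : {a : ℝ // a ∈ A ∧ a < (i : ℝ)} => genEig T ↑α')
        ⟨(j : ℝ), j.2, hjlt⟩ (hHsub (↑j) j.2 k (hf j))
    have : f i ∈ piImg T A G (↑i) k :=
      ⟨hHsub (↑i) i.2 k hfiH, x, hxG, hxV, hxlow⟩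
    have hzero := (hdirect (↑i) i.2 k).2 (f i) hfiH this
    exact (Finsupp.mem_support_iff.mp hi) hzero
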